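/- For any C ≥ 1 and n ∈ ℤ, the indicator δ_{n=0} equals Σ_{c≤C} Σ_{b mod c, (b,c)=1} ∫_{-1/(c(c+c'))}^{1/(c(c+c''))} e((b/c + z)n) dz, where b'/c', b/c, b''/c'' are consecutive Farey fractions of level C. -/

import Mathlib

open Finset

/-- The additive character `e(x) = exp(2πix)`. -/
noncomputable def e (x : ℝ) : ℂ := Complex.exp (2 * Real.pi * Complex.I * x)

noncomputable def gg (n : ℤ) (x : ℝ) : ℂ :=
  if n = 0 then (x : ℂ) else e (x * n) / (2 * Real.pi * Complex.I * n)

lemma e_add_int (x : ℝ) (k : ℤ) : e (x + k) = e x := by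
  unfold e
  push_cast
  rw [mul_add, Complex.exp_add]
  have h : Complex.exp (2 * (Real.pi : ℂ) * Complex.I * (k : ℂ)) = 1 := by
    rw [show (2 * (Real.pi : ℂ) * Complex.I * (k : ℂ)) = (k : ℂ) * (2 * Real.pi * Complex.I) by ring]
    exact Complex.exp_int_mul_two_pi_mul_I k
  rw [h, mul_one]

lemma gg_add_int (n : ℤ) (x : ℝ) (k : ℤ) :
    gg n (x + k) = gg n x + if n = 0 then (k : ℂ) else 0 := by
  unfold gg
  split_ifs with h
  · push_cast; ring
  · rw [add_mul, show ((k:ℝ) * n) = (((k*n : ℤ):ℝ)) by push_cast; ring, e_add_int, add_zero]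

lemma integral_e (n : ℤ) (q a b : ℝ) :
    (∫ z in a..b, e ((q + z) * n)) = gg n (q + b) - gg n (q + a) := by
  rcases eq_or_ne n 0 with h | h
  · subst h
    simp only [Int.cast_zero, mul_zero, gg, if_pos]
    have h1 : e 0 = 1 := by simp [e]
    rw [h1]
    simp only [intervalIntegral.integral_const, Complex.real_smul, mul_one]
    push_cast
    ring
  · set K : ℂ := 2 * Real.pi * Complex.I * n with hK
    have hn : (n:ℂ) ≠ 0 := Int.cast_ne_zero.mpr h
    have hK0 : K ≠ 0 := by
      apply mul_ne_zero (mul_ne_zero (mul_ne_zero two_ne_zero _) Complex.I_ne_zero) hn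
      exact_mod_cast Complex.ofReal_ne_zero.mpr Real.pi_ne_zero
    have hfun : ∀ z : ℝ, e ((q + z) * n) = Complex.exp (K * ((q:ℂ) + z)) := by
      intro z; unfold e; rw [show ((2:ℂ) * Real.pi * Complex.I * (((q+z)*n : ℝ):ℂ)) = K * ((q:ℂ)+z) by push_cast; ring]
    have hder : ∀ z : ℝ, HasDerivAt (fun z : ℝ => Complex.exp (K * ((q:ℂ) + z)) / K)
        (Complex.exp (K * ((q:ℂ) + z))) z := by
      intro z
      have h2 : HasDerivAt (fun w : ℂ => K * ((q:ℂ) + w)) K (z:ℂ) := by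
        simpa using ((hasDerivAt_id (z:ℂ)).const_add ((q:ℂ))).const_mul K
      have h3 := (Complex.hasDerivAt_exp (K * ((q:ℂ) + (z:ℂ)))).comp (z:ℂ) h2
      have h4 := h3.div_const K
      have h5 : Complex.exp (K * ((q:ℂ) + (z:ℂ))) * K / K = Complex.exp (K * ((q:ℂ) + (z:ℂ))) := by
        field_simp
      rw [h5] at h4
      exact h4.comp_ofReal
    have hcont : Continuous fun z : ℝ => Complex.exp (K * ((q:ℂ) + z)) := by
      apply Complex.continuous_exp.comp
      continuity
    have := intervalIntegral.integral_eq_sub_of_hasDerivAt (f := fun z : ℝ => Complex.exp (K * ((q:ℂ) + z)) / K)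
      (f' := fun z : ℝ => Complex.exp (K * ((q:ℂ) + z))) (a := a) (b := b)
      (fun x _ => hder x) (hcont.intervalIntegrable a b)
    rw [intervalIntegral.integral_congr (fun z _ => hfun z), this]
    simp only [gg, if_neg h, hfun]
    rw [← hK]

/-- Two congruent integers in a window of length `m` are equal. -/
lemma mod_window_eq {m x y a : ℤ} (h : x ≡ y [ZMOD m])
    (hx1 : a < x) (hx2 : x ≤ a + m) (hy1 : a < y) (hy2 : y ≤ a + m) : x = y := by
  have hd : m ∣ y - x := h.dvd
  have habs : |y - x| < m := abs_lt.mpr ⟨by omega, by omega⟩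
  have := Int.eq_zero_of_abs_lt_dvd hd habs
  omega

lemma coprime_of_int {x m : ℕ} {t : ℤ} (h1 : (x:ℤ) ∣ t) (h2 : (m:ℤ) ∣ t + 1) : Nat.Coprime x m := by
  have g1 : ((Nat.gcd x m : ℕ):ℤ) ∣ t := dvd_trans (Int.natCast_dvd_natCast.mpr (Nat.gcd_dvd_left x m)) h1
  have g2 : ((Nat.gcd x m : ℕ):ℤ) ∣ t + 1 := dvd_trans (Int.natCast_dvd_natCast.mpr (Nat.gcd_dvd_right x m)) h2
  have g3 : ((Nat.gcd x m : ℕ):ℤ) ∣ 1 := by simpa using dvd_sub g2 g1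
  exact Nat.dvd_one.mp (Int.natCast_dvd_natCast.mp (by exact_mod_cast g3))

lemma coprime_of_int' {x m : ℕ} {t : ℤ} (h1 : (x:ℤ) ∣ t) (h2 : (m:ℤ) ∣ t - 1) : Nat.Coprime x m := by
  have g1 : ((Nat.gcd x m : ℕ):ℤ) ∣ t := dvd_trans (Int.natCast_dvd_natCast.mpr (Nat.gcd_dvd_left x m)) h1
  have g2 : ((Nat.gcd x m : ℕ):ℤ) ∣ t - 1 := dvd_trans (Int.natCast_dvd_natCast.mpr (Nat.gcd_dvd_right x m)) h2
  have g3 : ((Nat.gcd x m : ℕ):ℤ) ∣ 1 := by simpa using dvd_sub g1 g2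
  exact Nat.dvd_one.mp (Int.natCast_dvd_natCast.mp (by exact_mod_cast g3))

/-- `(d,B)` is the Farey-successor data of `(c,b)` at level `C`. -/
structure Link (C c b d B : ℕ) : Prop where
  hc1 : 1 ≤ c
  hcC : c ≤ C
  hd1 : 1 ≤ d
  hdC : d ≤ C
  hcd : C < c + d
  hb : b < c
  hB : B < d
  hbd : (b:ℤ) * d ≡ -1 [ZMOD (c:ℕ)]
  hBc : (B:ℤ) * c ≡ 1 [ZMOD (d:ℕ)]

namespace Link

variable {C c b d B : ℕ}

lemma dvd_c (h : Link C c b d B) : (c:ℤ) ∣ (b:ℤ) * d + 1 := by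
  have := h.hbd.dvd
  have h2 : ((-1:ℤ) - (b:ℤ)*d) = -((b:ℤ)*d + 1) := by ring
  rw [h2] at this
  exact (dvd_neg).mp this

lemma dvd_d (h : Link C c b d B) : (d:ℤ) ∣ (B:ℤ) * c - 1 := by
  have := h.hBc.dvd
  have h2 : ((1:ℤ) - (B:ℤ)*c) = -((B:ℤ)*c - 1) := by ring
  rw [h2] at this
  exact (dvd_neg).mp this

lemma cop_bc (h : Link C c b d B) : Nat.Coprime b c := coprime_of_int ⟨(d:ℤ), rfl⟩ h.dvd_c

lemma cop_cd (h : Link C c b d B) : Nat.Coprime c d := (coprime_of_int (x := d) (m := c) (t := (b:ℤ)*d) (Dvd.intro_left _ rfl) h.dvd_c).symm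

lemma cop_Bd (h : Link C c b d B) : Nat.Coprime B d := coprime_of_int' ⟨(c:ℤ), rfl⟩ h.dvd_d

end Link

/-- Uniqueness of the successor. -/
lemma succ_unique {C c b d B d2 B2 : ℕ} (h1 : Link C c b d B) (h2 : Link C c b d2 B2) :
    d = d2 ∧ B = B2 := by
  have hcb : IsCoprime (c:ℤ) (b:ℤ) := by
    rw [Int.isCoprime_iff_gcd_eq_one]
    exact_mod_cast (h1.cop_bc.symm : Nat.Coprime c b)
  have hcdvd : (c:ℤ) ∣ (b:ℤ) * ((d2:ℤ) - d) := by
    have e1 := h1.dvd_c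
    have e2 := h2.dvd_c
    have : (b:ℤ) * ((d2:ℤ) - d) = ((b:ℤ)*d2 + 1) - ((b:ℤ)*d + 1) := by ring
    rw [this]
    exact dvd_sub e2 e1
  have hdd : (c:ℤ) ∣ ((d2:ℤ) - d) := hcb.dvd_of_dvd_mul_left hcdvd
  have hd : (d:ℤ) = d2 := by
    have habs : |(d2:ℤ) - d| < c := by
      have b1 : (C:ℤ) < c + d := by exact_mod_cast h1.hcd
      have b2 : (C:ℤ) < c + d2 := by exact_mod_cast h2.hcd
      have b3 : (d:ℤ) ≤ C := by exact_mod_cast h1.hdC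
      have b4 : (d2:ℤ) ≤ C := by exact_mod_cast h2.hdC
      rw [abs_lt]; omega
    have := Int.eq_zero_of_abs_lt_dvd hdd habs
    omega
  have hdn : d = d2 := by exact_mod_cast hd
  subst hdn
  refine ⟨rfl, ?_⟩
  have hcd : IsCoprime (d:ℤ) (c:ℤ) := by
    rw [Int.isCoprime_iff_gcd_eq_one]
    exact_mod_cast (h1.cop_cd.symm : Nat.Coprime d c)
  have hdvd : (d:ℤ) ∣ (c:ℤ) * ((B2:ℤ) - B) := by
    have e1 := h1.dvd_d
    have e2 := h2.dvd_d
    have : (c:ℤ) * ((B2:ℤ) - B) = ((B2:ℤ)*c - 1) - ((B:ℤ)*c - 1) := by ring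
    rw [this]
    exact dvd_sub e2 e1
  have hBB : (d:ℤ) ∣ ((B2:ℤ) - B) := hcd.dvd_of_dvd_mul_left hdvd
  have habs : |(B2:ℤ) - B| < d := by
    have b1 : (B:ℤ) < d := by exact_mod_cast h1.hB
    have b2 : (B2:ℤ) < d := by exact_mod_cast h2.hB
    rw [abs_lt]; omega
  have := Int.eq_zero_of_abs_lt_dvd hBB habs
  omega

/-- Uniqueness of the predecessor. -/
lemma pred_unique {C c b c2 b2 d B : ℕ} (h1 : Link C c b d B) (h2 : Link C c2 b2 d B) :
    c = c2 ∧ b = b2 := by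
  have hdB : IsCoprime (d:ℤ) (B:ℤ) := by
    rw [Int.isCoprime_iff_gcd_eq_one]
    exact_mod_cast (h1.cop_Bd.symm : Nat.Coprime d B)
  have hdvd : (d:ℤ) ∣ (B:ℤ) * ((c2:ℤ) - c) := by
    have e1 := h1.dvd_d
    have e2 := h2.dvd_d
    have : (B:ℤ) * ((c2:ℤ) - c) = ((B:ℤ)*c2 - 1) - ((B:ℤ)*c - 1) := by ring
    rw [this]
    exact dvd_sub e2 e1
  have hcc : (d:ℤ) ∣ ((c2:ℤ) - c) := hdB.dvd_of_dvd_mul_left hdvd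
  have hc : (c:ℤ) = c2 := by
    have habs : |(c2:ℤ) - c| < d := by
      have b1 : (C:ℤ) < c + d := by exact_mod_cast h1.hcd
      have b2 : (C:ℤ) < c2 + d := by exact_mod_cast h2.hcd
      have b3 : (c:ℤ) ≤ C := by exact_mod_cast h1.hcC
      have b4 : (c2:ℤ) ≤ C := by exact_mod_cast h2.hcC
      rw [abs_lt]; omega
    have := Int.eq_zero_of_abs_lt_dvd hcc habs
    omega
  have hcn : c = c2 := by exact_mod_cast hc
  subst hcn
  refine ⟨rfl, ?_⟩
  have hcd : IsCoprime (c:ℤ) (d:ℤ) := by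
    rw [Int.isCoprime_iff_gcd_eq_one]
    exact_mod_cast h1.cop_cd
  have hdvd2 : (c:ℤ) ∣ (d:ℤ) * ((b2:ℤ) - b) := by
    have e1 := h1.dvd_c
    have e2 := h2.dvd_c
    have : (d:ℤ) * ((b2:ℤ) - b) = ((b2:ℤ)*d + 1) - ((b:ℤ)*d + 1) := by ring
    rw [this]
    exact dvd_sub e2 e1
  have hbb : (c:ℤ) ∣ ((b2:ℤ) - b) := hcd.dvd_of_dvd_mul_left hdvd2
  have habs : |(b2:ℤ) - b| < c := by
    have b1 : (b:ℤ) < c := by exact_mod_cast h1.hb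
    have b2 : (b2:ℤ) < c := by exact_mod_cast h2.hb
    rw [abs_lt]; omega
  have := Int.eq_zero_of_abs_lt_dvd hbb habs
  omega

/-- Construction of the successor data, with the key integer identity. -/
lemma mkSucc {C c b d : ℕ} (hc1 : 1 ≤ c) (hcC : c ≤ C) (hb : b < c)
    (hd1 : (C:ℤ) - c < d) (hdC : (d:ℤ) ≤ C) (hbd : (b:ℤ)*d ≡ -1 [ZMOD (c:ℕ)]) :
    Link C c b d ((b*d+1)/c % d) ∧
      ((((b*d+1)/c % d : ℕ):ℤ) * c
        = (b:ℤ)*d + 1 - (if b + 1 = c ∧ d = 1 then 1 else 0) * ((c:ℤ)*d)) := by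
  have hd0 : 1 ≤ d := by omega
  have hdvdZ : (c:ℤ) ∣ (b:ℤ) * d + 1 := by
    have := hbd.dvd
    have h2 : ((-1:ℤ) - (b:ℤ)*d) = -((b:ℤ)*d + 1) := by ring
    rw [h2] at this
    exact (dvd_neg).mp this
  have hdvd : c ∣ b*d + 1 := by
    have : (c:ℤ) ∣ ((b*d+1 : ℕ):ℤ) := by push_cast; exact hdvdZ
    exact_mod_cast this
  set q := (b*d+1)/c with hqdef
  have hqc : q * c = b*d + 1 := Nat.div_mul_cancel hdvd
  have hqd : q ≤ d := by
    have h1 : q * c ≤ d * c := by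
      rw [hqc]
      nlinarith [Nat.mul_le_mul_right d (show b+1 ≤ c from hb)]
    exact Nat.le_of_mul_le_mul_right h1 (by omega)
  set B := q % d with hBdef
  set T := q / d with hTdef
  have hqdT : d * T + B = q := Nat.div_add_mod q d
  have hB : B < d := Nat.mod_lt _ (by omega)
  have hT01 : T = if b + 1 = c ∧ d = 1 then 1 else 0 := by
    split_ifs with hcond
    · obtain ⟨h1, h2⟩ := hcond
      have hq1 : q * c = c := by rw [hqc, h2]; omega
      have hq1' : q * c = 1 * c := by rw [hq1, one_mul]
      have hq2' : q = 1 := Nat.eq_of_mul_eq_mul_right (by omega) hq1'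
      simp [hTdef, hq2', h2]
    · rcases Nat.lt_or_ge q d with hlt | hge
      · exact Nat.div_eq_of_lt hlt
      · exfalso
        have hq_eq : q = d := le_antisymm hqd hge
        have h1 : d * c = b * d + 1 := by rw [← hq_eq, mul_comm] at hqc ⊢; omega
        have hd_dvd : d ∣ 1 := by
          have ha : d ∣ b * d := dvd_mul_left d b
          have hb2 : d ∣ d * c := dvd_mul_right d c
          have := Nat.dvd_sub hb2 ha
          rwa [h1, Nat.add_sub_cancel_left] at this
        have hd1' : d = 1 := Nat.dvd_one.mp hd_dvd
        apply hcond
        constructor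
        · rw [hd1'] at h1; omega
        · exact hd1'
  have hcastq : ((d*T + B : ℕ):ℤ) * c = (b:ℤ)*d + 1 := by
    rw [hqdT]; exact_mod_cast hqc
  push_cast at hcastq
  have hTZ : ((if b + 1 = c ∧ d = 1 then 1 else 0 : ℤ)) = (T:ℤ) := by
    rw [hT01]; split_ifs <;> simp
  have key2 : (B:ℤ) * c = (b:ℤ)*d + 1 - (T:ℤ) * ((c:ℤ)*d) := by
    linear_combination hcastq
  have key : (B:ℤ) * c = (b:ℤ)*d + 1 - (if b + 1 = c ∧ d = 1 then 1 else 0) * ((c:ℤ)*d) := by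
    rw [hTZ]; exact key2
  have hBc : (B:ℤ) * c ≡ 1 [ZMOD (d:ℕ)] := by
    exact Int.modEq_iff_dvd.mpr ⟨(T:ℤ)*c - b, by linear_combination -key2⟩
  refine ⟨⟨hc1, hcC, hd0, by exact_mod_cast hdC, by omega, hb, hB, hbd, hBc⟩, key⟩

/-- Construction of the predecessor data. -/
lemma mkPred {C d a c : ℕ} (hd1 : 1 ≤ d) (hdC : d ≤ C) (ha : a < d)
    (hc1 : (C:ℤ) - d < c) (hcC : (c:ℤ) ≤ C) (hac : (a:ℤ)*c ≡ 1 [ZMOD (d:ℕ)]) :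
    Link C c ((a*c + c*d - 1)/d % c) d a := by
  have hc0 : 1 ≤ c := by omega
  have hone : 1 ≤ a*c + c*d := by nlinarith
  set N := a*c + c*d - 1 with hNdef
  have hN : (N:ℤ) = (a:ℤ)*c + (c:ℤ)*d - 1 := by
    rw [hNdef]; push_cast [hone]; ring
  have hdvdZ : (d:ℤ) ∣ (N:ℤ) := by
    have h1 : (d:ℤ) ∣ (a:ℤ)*c - 1 := by
      have := hac.dvd
      have h2 : ((1:ℤ) - (a:ℤ)*c) = -((a:ℤ)*c - 1) := by ring
      rw [h2] at this
      exact (dvd_neg).mp this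
    have h2 : (d:ℤ) ∣ (c:ℤ)*d := Dvd.intro_left _ rfl
    have h3 := dvd_add h1 h2
    have h4 : (a:ℤ)*c + (c:ℤ)*d - 1 = (a:ℤ)*c - 1 + (c:ℤ)*d := by ring
    rw [hN, h4]
    exact h3
  have hdvd : d ∣ N := by exact_mod_cast hdvdZ
  set q := N / d with hqdef
  have hqd : q * d = N := Nat.div_mul_cancel hdvd
  set b := q % c with hbdef
  set Q := q / c with hQdef
  have hqcQ : c * Q + b = q := Nat.div_add_mod q c
  have hb : b < c := Nat.mod_lt _ (by omega)
  have hbd : (b:ℤ) * d ≡ -1 [ZMOD (c:ℕ)] := by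
    rw [Int.modEq_iff_dvd]
    refine ⟨(Q:ℤ)*d - a - d, ?_⟩
    have hq1 : (q:ℤ) * d = (N:ℤ) := by exact_mod_cast hqd
    have hq2 : (c:ℤ) * Q + b = q := by exact_mod_cast hqcQ
    linear_combination (-(d:ℤ)) * hq2 - hq1 - hN
  exact ⟨hc0, by exact_mod_cast hcC, hd1, hdC, by omega, hb, ha, hbd, hac⟩

/-- The real mediant identity. -/
lemma link_real {c b d B : ℕ} (hc : 1 ≤ c) (hd : 1 ≤ d) {t : ℤ}
    (key : (B:ℤ)*c = (b:ℤ)*d + 1 - t * ((c:ℤ)*d)) :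
    (b:ℝ)/c + 1/((c:ℝ)*((c:ℝ)+d)) = (B:ℝ)/d - 1/((d:ℝ)*((d:ℝ)+c)) + (t:ℝ) := by
  have hc0 : (c:ℝ) > 0 := by exact_mod_cast hc
  have hd0 : (d:ℝ) > 0 := by exact_mod_cast hd
  have hcd : (c:ℝ) + d > 0 := by positivity
  have keyR : (B:ℝ)*c = (b:ℝ)*d + 1 - (t:ℝ) * ((c:ℝ)*d) := by exact_mod_cast key
  have h1 : (b:ℝ)/c + 1/((c:ℝ)*((c:ℝ)+d)) = ((b:ℝ)*d*((c:ℝ)+d) + d) / ((c:ℝ)*d*((c:ℝ)+d)) := by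
    field_simp
  have h2 : (B:ℝ)/d - 1/((d:ℝ)*((d:ℝ)+c)) + (t:ℝ)
      = ((B:ℝ)*c*((c:ℝ)+d) - c + (t:ℝ)*((c:ℝ)*d*((c:ℝ)+d))) / ((c:ℝ)*d*((c:ℝ)+d)) := by
    field_simp
    ring
  rw [h1, h2]
  congr 1
  linear_combination (-((c:ℝ)+d)) * keyR

/-- Successor map on Farey index pairs. -/
def nxtF (f : ℕ → ℕ → ℕ) (p : Σ _ : ℕ, ℕ) : Σ _ : ℕ, ℕ :=
  ⟨f p.1 p.2, (p.2 * f p.1 p.2 + 1) / p.1 % f p.1 p.2⟩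

/-- Predecessor map on Farey index pairs. -/
def prvF (f : ℕ → ℕ → ℕ) (p : Σ _ : ℕ, ℕ) : Σ _ : ℕ, ℕ :=
  ⟨f p.1 p.2, (p.2 * f p.1 p.2 + f p.1 p.2 * p.1 - 1) / p.1 % f p.1 p.2⟩

lemma sigma_eq {x y : Σ _ : ℕ, ℕ} (h1 : x.1 = y.1) (h2 : x.2 = y.2) : x = y := by
  cases x; cases y
  simp only at h1 h2
  subst h1; subst h2; rfl

/-- Lower endpoint of the Farey arc at `p` (given the left-neighbour denominator function). -/
noncomputable def Mlo (f : ℕ → ℕ → ℕ) (p : Σ _ : ℕ, ℕ) : ℝ :=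
  (p.2:ℝ)/p.1 + -(1 / ((p.1:ℝ) * ((p.1:ℝ) + f p.1 p.2)))

/-- Upper endpoint of the Farey arc at `p` (given the right-neighbour denominator function). -/
noncomputable def Mhi (f : ℕ → ℕ → ℕ) (p : Σ _ : ℕ, ℕ) : ℝ :=
  (p.2:ℝ)/p.1 + 1 / ((p.1:ℝ) * ((p.1:ℝ) + f p.1 p.2))

/-- the Farey dissection form of the delta symbol.  For `C ≥ 1` and `n ∈ ℤ`,
`δ_{n=0} = ∑_{c ≤ C} ∑_{b mod c, (b,c)=1} ∫_{-1/(c(c+c'))}^{1/(c(c+c''))} e((b/c+z)n) dz`,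
where for each reduced fraction `b/c` of level `C` the numbers `c' = c'(c,b)` and
`c'' = c''(c,b)` are the denominators of the neighbouring Farey fractions, characterised by
`C - c < c', c'' ≤ C`, `b·c' ≡ 1 (mod c)` and `b·c'' ≡ -1 (mod c)`. -/
theorem farey_delta_symbol
    (C : ℕ) (hC : 1 ≤ C) (n : ℤ)
    (c' c'' : ℕ → ℕ → ℕ)
    (hnbr : ∀ c ∈ Finset.Icc 1 C, ∀ b ∈ (Finset.range c).filter (fun b => Nat.Coprime b c),
      ((C : ℤ) - c < c' c b ∧ (c' c b : ℤ) ≤ C ∧ ((b : ℤ) * c' c b ≡ 1 [ZMOD (c : ℕ)])) ∧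
      ((C : ℤ) - c < c'' c b ∧ (c'' c b : ℤ) ≤ C ∧ ((b : ℤ) * c'' c b ≡ -1 [ZMOD (c : ℕ)]))) :
    (∑ c ∈ Finset.Icc 1 C, ∑ b ∈ (Finset.range c).filter (fun b => Nat.Coprime b c),
        ∫ z in (-(1 / ((c : ℝ) * ((c : ℝ) + c' c b))))..(1 / ((c : ℝ) * ((c : ℝ) + c'' c b))),
          e (((b : ℝ)/c + z) * n))
      = if n = 0 then 1 else 0 := by
  classical
  rw [Finset.sum_sigma']
  set S : Finset (Σ _ : ℕ, ℕ) :=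
    (Finset.Icc 1 C).sigma (fun c => (Finset.range c).filter (fun b => Nat.Coprime b c)) with hSdef
  have hmem : ∀ p : (Σ _ : ℕ, ℕ), p ∈ S ↔ 1 ≤ p.1 ∧ p.1 ≤ C ∧ p.2 < p.1 ∧ Nat.Coprime p.2 p.1 := by
    intro p
    simp [hSdef, Finset.mem_sigma, Finset.mem_Icc, Finset.mem_filter, Finset.mem_range, and_assoc]
  -- successor data and the key integer identity
  have key : ∀ p ∈ S,
      Link C p.1 p.2 (nxtF c'' p).1 (nxtF c'' p).2 ∧
      (((nxtF c'' p).2 : ℤ) * p.1 = (p.2:ℤ) * (nxtF c'' p).1 + 1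
          - (if p.2 + 1 = p.1 ∧ (nxtF c'' p).1 = 1 then 1 else 0) * ((p.1:ℤ) * (nxtF c'' p).1)) := by
    intro p hp
    rw [hmem] at hp
    obtain ⟨h1, h2, h3, h4⟩ := hp
    have hh := (hnbr p.1 (Finset.mem_Icc.mpr ⟨h1, h2⟩) p.2
      (Finset.mem_filter.mpr ⟨Finset.mem_range.mpr h3, h4⟩)).2
    obtain ⟨hd1, hd2, hd3⟩ := hh
    exact mkSucc h1 h2 h3 hd1 hd2 hd3
  -- predecessor data
  have keyP : ∀ p ∈ S, Link C (prvF c' p).1 (prvF c' p).2 p.1 p.2 := by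
    intro p hp
    rw [hmem] at hp
    obtain ⟨h1, h2, h3, h4⟩ := hp
    have hh := (hnbr p.1 (Finset.mem_Icc.mpr ⟨h1, h2⟩) p.2
      (Finset.mem_filter.mpr ⟨Finset.mem_range.mpr h3, h4⟩)).1
    obtain ⟨hc1, hc2, hc3⟩ := hh
    exact mkPred h1 h2 h3 hc1 hc2 hc3
  have memN : ∀ p ∈ S, nxtF c'' p ∈ S := by
    intro p hp
    have l := (key p hp).1
    rw [hmem]
    exact ⟨l.hd1, l.hdC, l.hB, l.cop_Bd⟩
  have memP : ∀ p ∈ S, prvF c' p ∈ S := by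
    intro p hp
    have l := keyP p hp
    rw [hmem]
    exact ⟨l.hc1, l.hcC, l.hb, l.cop_bc⟩
  have hPN : ∀ p ∈ S, prvF c' (nxtF c'' p) = p := by
    intro p hp
    have l1 := keyP (nxtF c'' p) (memN p hp)
    have l2 := (key p hp).1
    obtain ⟨e1, e2⟩ := pred_unique l1 l2
    exact sigma_eq e1 e2
  have hNP : ∀ p ∈ S, nxtF c'' (prvF c' p) = p := by
    intro p hp
    have l1 := (key (prvF c' p) (memP p hp)).1
    have l2 := keyP p hp
    obtain ⟨e1, e2⟩ := succ_unique l1 l2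
    exact sigma_eq e1 e2
  -- the distinguished point
  have hpC : (⟨C, C - 1⟩ : Σ _ : ℕ, ℕ) ∈ S := by
    rw [hmem]
    show 1 ≤ C ∧ C ≤ C ∧ C - 1 < C ∧ Nat.Coprime (C - 1) C
    refine ⟨hC, le_refl C, by omega, ?_⟩
    refine coprime_of_int (t := (C:ℤ) - 1) ?_ ?_
    · have h : ((C - 1 : ℕ):ℤ) = (C:ℤ) - 1 := by omega
      rw [h]
    · rw [sub_add_cancel]
  have hTiff : ∀ p ∈ S,
      ((p.2 + 1 = p.1 ∧ (nxtF c'' p).1 = 1) ↔ p = (⟨C, C - 1⟩ : Σ _ : ℕ, ℕ)) := by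
    intro p hp
    have l := (key p hp).1
    constructor
    · rintro ⟨h1, h2⟩
      have hcd := l.hcd
      rw [h2] at hcd
      have hcC := l.hcC
      exact sigma_eq (show p.1 = C by omega) (show p.2 = C - 1 by omega)
    · rintro rfl
      have hb : (C - 1 : ℕ) + 1 = C := by omega
      refine ⟨hb, ?_⟩
      have h0 := l.dvd_c
      have hcast : (((⟨C, C - 1⟩ : Σ _ : ℕ, ℕ).2 : ℕ):ℤ) = (C:ℤ) - 1 := by
        show ((C - 1 : ℕ):ℤ) = (C:ℤ) - 1
        omega
      rw [hcast] at h0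
      have hdl : (C:ℤ) ∣ ((nxtF c'' (⟨C, C - 1⟩ : Σ _ : ℕ, ℕ)).1 : ℤ) - 1 := by
        have hCd : (C:ℤ) ∣ (C:ℤ) * ((nxtF c'' (⟨C, C - 1⟩ : Σ _ : ℕ, ℕ)).1 : ℤ) :=
          Dvd.intro _ rfl
        have h5 := dvd_sub hCd h0
        have h6 : (C:ℤ) * ((nxtF c'' (⟨C, C - 1⟩ : Σ _ : ℕ, ℕ)).1 : ℤ)
            - (((C:ℤ) - 1) * ((nxtF c'' (⟨C, C - 1⟩ : Σ _ : ℕ, ℕ)).1 : ℤ) + 1)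
            = ((nxtF c'' (⟨C, C - 1⟩ : Σ _ : ℕ, ℕ)).1 : ℤ) - 1 := by ring
        rwa [h6] at h5
      have hd1 : 1 ≤ (nxtF c'' (⟨C, C - 1⟩ : Σ _ : ℕ, ℕ)).1 := l.hd1
      have hdC : (nxtF c'' (⟨C, C - 1⟩ : Σ _ : ℕ, ℕ)).1 ≤ C := l.hdC
      have habs : |((nxtF c'' (⟨C, C - 1⟩ : Σ _ : ℕ, ℕ)).1 : ℤ) - 1| < C := by
        rw [abs_lt]
        omega
      have := Int.eq_zero_of_abs_lt_dvd hdl habs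
      omega
  -- per-point real identity
  have hreal : ∀ p ∈ S, Mhi c'' p
      = Mlo c' (nxtF c'' p) + ((if p = (⟨C, C - 1⟩ : Σ _ : ℕ, ℕ) then (1:ℤ) else 0 : ℤ):ℝ) := by
    intro p hp
    have l := (key p hp).1
    have k := (key p hp).2
    have hcond : (if p.2 + 1 = p.1 ∧ (nxtF c'' p).1 = 1 then (1:ℤ) else 0)
        = (if p = (⟨C, C - 1⟩ : Σ _ : ℕ, ℕ) then (1:ℤ) else 0) := by
      simp only [hTiff p hp]
    rw [hcond] at k
    have hc'eq : c' (nxtF c'' p).1 (nxtF c'' p).2 = p.1 := by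
      have h7 := congrArg (fun x : (Σ _ : ℕ, ℕ) => x.1) (hPN p hp)
      simpa [prvF] using h7
    have lr := link_real (c := p.1) (d := (nxtF c'' p).1) l.hc1 l.hd1
      (t := if p = (⟨C, C - 1⟩ : Σ _ : ℕ, ℕ) then (1:ℤ) else 0) k
    simp only [Mhi, Mlo, nxtF]
    simp only [nxtF] at lr hc'eq
    rw [hc'eq]
    linarith [lr]
  -- assemble
  have step1 : ∀ p ∈ S,
      (∫ z in (-(1 / ((p.1 : ℝ) * ((p.1 : ℝ) + c' p.1 p.2))))..(1 / ((p.1 : ℝ) * ((p.1 : ℝ) + c'' p.1 p.2))),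
          e (((p.2 : ℝ)/p.1 + z) * n))
      = gg n (Mhi c'' p) - gg n (Mlo c' p) := by
    intro p _
    exact integral_e n ((p.2 : ℝ)/p.1) _ _
  rw [Finset.sum_congr rfl step1, Finset.sum_sub_distrib]
  have step2 : ∀ p ∈ S, gg n (Mhi c'' p)
      = gg n (Mlo c' (nxtF c'' p))
        + (if p = (⟨C, C - 1⟩ : Σ _ : ℕ, ℕ) then (if n = 0 then (1:ℂ) else 0) else 0) := by
    intro p hp
    rw [hreal p hp, gg_add_int]
    congr 1
    split_ifs <;> simp
  rw [Finset.sum_congr rfl step2, Finset.sum_add_distrib,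
    Finset.sum_ite_eq' S (⟨C, C - 1⟩ : Σ _ : ℕ, ℕ), if_pos hpC]
  have step3 : ∑ p ∈ S, gg n (Mlo c' (nxtF c'' p)) = ∑ p ∈ S, gg n (Mlo c' p) :=
    Finset.sum_nbij' (nxtF c'') (prvF c') memN memP hPN hNP (fun p _ => rfl)
  rw [step3]
  ring
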